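/- arXiv:2102.09020 — 4 statements merged into one kernel-verified Lean document; each statement's English description precedes it below -/
import Mathlib

section
/- Let D_n be the determinant of the n×n tridiagonal matrix with diagonal entries (d_k + c_k), superdiagonal entries -c_k (in row k), and subdiagonal entries -d_{k+1} (in row k+1). Then D_n = Σ_{j=0}^{n} (d_1 ⋯ d_j)(c_{j+1} ⋯ c_n), i.e., the sum over j of the product of the first j of the d's times the last n-j of the c's. -/
open Finset

section TriAux

variable {R : Type*} [CommRing R]

private def triA (n : ℕ) (c d : ℕ → R) : Matrix (Fin n) (Fin n) R :=
  Matrix.of fun k j => if (k:ℕ) = (j:ℕ) then d k + c k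
    else if (j:ℕ) = (k:ℕ) + 1 then -(c (k:ℕ))
    else if (k:ℕ) = (j:ℕ) + 1 then -(d (k:ℕ))
    else 0

private def triS (n : ℕ) (c d : ℕ → R) : R :=
  ∑ j ∈ range (n+1), (∏ i ∈ range j, d i) * ∏ i ∈ Ico j n, c i

private lemma triA_sub1 (n : ℕ) (c d : ℕ → R) :
    (triA (n+1) c d).submatrix Fin.succ Fin.succ
      = triA n (fun i => c (i+1)) (fun i => d (i+1)) := by
  ext k j
  simp only [triA, Matrix.submatrix_apply, Matrix.of_apply, Fin.val_succ]
  split_ifs <;> first | rfl | omega | exact absurd ‹False› (by tauto)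

private lemma triA_det_rec (n : ℕ) (c d : ℕ → R) :
    (triA (n+2) c d).det
      = (d 0 + c 0) * (triA (n+1) (fun i => c (i+1)) (fun i => d (i+1))).det
        - c 0 * d 1 * (triA n (fun i => c (i+2)) (fun i => d (i+2))).det := by
  rw [Matrix.det_succ_row_zero, Fin.sum_univ_succ, Fin.sum_univ_succ]
  have hz : ∀ j : Fin n, triA (n+2) c d 0 j.succ.succ = 0 := by
    intro j
    simp only [triA, Matrix.of_apply, Fin.val_succ, Fin.val_zero]
    split_ifs <;> first | rfl | omega | exact absurd ‹False› (by tauto)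
  simp only [hz, mul_zero, zero_mul, sum_const_zero, add_zero]
  have h00 : triA (n+2) c d 0 0 = d 0 + c 0 := by simp [triA]
  have h01 : triA (n+2) c d 0 1 = -(c 0) := by
    simp only [triA, Matrix.of_apply, Fin.val_zero, Fin.val_one]
    norm_num
  have hsa0 : (1 : Fin (n+2)).succAbove 0 = 0 := by
    simp [Fin.succAbove, Fin.lt_def]
  have hsa : ∀ j : Fin n, (1 : Fin (n+2)).succAbove j.succ = j.succ.succ := by
    intro j
    simp [Fin.succAbove, Fin.lt_def]
  have hsub2 : ((triA (n+2) c d).submatrix Fin.succ (Fin.succAbove 1)).submatrix Fin.succ Fin.succ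
      = triA n (fun i => c (i+2)) (fun i => d (i+2)) := by
    ext k j
    simp only [Matrix.submatrix_apply, hsa, triA, Matrix.of_apply, Fin.val_succ]
    split_ifs <;> first | rfl | omega | exact absurd ‹False› (by tauto)
  have hM : ((triA (n+2) c d).submatrix Fin.succ (Fin.succAbove 1)).det
      = -(d 1) * (triA n (fun i => c (i+2)) (fun i => d (i+2))).det := by
    rw [Matrix.det_succ_column_zero, Fin.sum_univ_succ]
    have e0 : (triA (n+2) c d).submatrix Fin.succ (Fin.succAbove 1) 0 0 = -(d 1) := by
      simp only [Matrix.submatrix_apply, hsa0, triA, Matrix.of_apply, Fin.val_succ, Fin.val_zero]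
      norm_num
    have ez : ∀ i : Fin n, (triA (n+2) c d).submatrix Fin.succ (Fin.succAbove 1) i.succ 0 = 0 := by
      intro i
      simp only [Matrix.submatrix_apply, hsa0, triA, Matrix.of_apply, Fin.val_succ, Fin.val_zero]
      split_ifs <;> first | rfl | omega | exact absurd ‹False› (by tauto)
    simp only [ez, mul_zero, zero_mul, sum_const_zero, add_zero, e0]
    rw [Fin.succAbove_zero, hsub2]
    simp
  simp only [Fin.succ_zero_eq_one] at *
  rw [Fin.succAbove_zero, triA_sub1, hM, h00, h01]
  simp only [Fin.val_zero, Fin.val_one, pow_zero, pow_one]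
  ring

private lemma triS_rec1 (n : ℕ) (c d : ℕ → R) :
    triS (n+1) c d
      = (∏ i ∈ range (n+1), c i)
        + d 0 * triS n (fun i => c (i+1)) (fun i => d (i+1)) := by
  unfold triS
  rw [sum_range_succ']
  simp only [prod_range_zero, one_mul, Nat.Ico_zero_eq_range]
  rw [add_comm]
  congr 1
  rw [mul_sum]
  refine sum_congr rfl fun j hj => ?_
  rw [prod_range_succ' d, ← Finset.prod_Ico_add' c j n 1]
  ring

private lemma triS_rec2 (n : ℕ) (c d : ℕ → R) :
    triS (n+2) c d
      = (d 0 + c 0) * triS (n+1) (fun i => c (i+1)) (fun i => d (i+1))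
        - c 0 * d 1 * triS n (fun i => c (i+2)) (fun i => d (i+2)) := by
  have h2 : triS (n+1) (fun i => c (i+1)) (fun i => d (i+1))
      = (∏ i ∈ range (n+1), c (i+1))
        + d 1 * triS n (fun i => c (i+2)) (fun i => d (i+2)) := by
    rw [triS_rec1]
  rw [triS_rec1, h2, prod_range_succ' c]
  ring

private lemma triA_det_eq : ∀ (n : ℕ) (c d : ℕ → R), (triA n c d).det = triS n c d := by
  intro n
  induction n using Nat.strong_induction_on with
  | _ n ih =>
    match n with
    | 0 => intro c d; simp [triA, triS]
    | 1 =>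
      intro c d
      rw [Matrix.det_fin_one]
      simp [triA, triS, sum_range_succ]
      ring
    | (m+2) =>
      intro c d
      rw [triA_det_rec, triS_rec2, ih (m+1) (by omega), ih m (by omega)]

end TriAux

/-- Determinant of the tridiagonal matrix with diagonal `d k + c k`, superdiagonal `-c k`
(in row `k`), and subdiagonal `-d (k+1)` (in row `k+1`):
`D_n = Σ_{j=0}^{n} (d_0 ⋯ d_{j-1})(c_j ⋯ c_{n-1})` (0-based indexing). -/
theorem stmt_2 {R : Type*} [CommRing R] (n : ℕ) (c d : Fin n → R) :
    (Matrix.of fun k j : Fin n =>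
        if k = j then d k + c k
        else if (j : ℕ) = (k : ℕ) + 1 then -c k
        else if (k : ℕ) = (j : ℕ) + 1 then -d k
        else 0).det
      = ∑ j ∈ Finset.range (n + 1),
          (∏ i ∈ Finset.univ.filter (fun i : Fin n => (i : ℕ) < j), d i) *
          (∏ i ∈ Finset.univ.filter (fun i : Fin n => j ≤ (i : ℕ)), c i) := by
  set C : ℕ → R := fun i => if h : i < n then c ⟨i, h⟩ else 1 with hC
  set D : ℕ → R := fun i => if h : i < n then d ⟨i, h⟩ else 1 with hD
  have hCv : ∀ i : Fin n, C (i : ℕ) = c i := by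
    intro i; simp [hC, i.isLt]
  have hDv : ∀ i : Fin n, D (i : ℕ) = d i := by
    intro i; simp [hD, i.isLt]
  have hmat : (Matrix.of fun k j : Fin n =>
        if k = j then d k + c k
        else if (j : ℕ) = (k : ℕ) + 1 then -c k
        else if (k : ℕ) = (j : ℕ) + 1 then -d k
        else 0) = triA n C D := by
    ext k j
    simp only [triA, Matrix.of_apply, Fin.ext_iff, hCv, hDv]
  rw [hmat, triA_det_eq, triS]
  refine sum_congr rfl fun j hj => ?_
  have hjn : j ≤ n := by simpa using Nat.lt_succ_iff.mp (mem_range.mp hj)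
  congr 1
  · rw [prod_filter]
    rw [show (fun i : Fin n => if (i : ℕ) < j then d i else 1)
        = fun i : Fin n => (fun m => if m < j then D m else 1) (i : ℕ) from
        funext fun i => by simp [hDv]]
    rw [Fin.prod_univ_eq_prod_range (fun m => if m < j then D m else 1) n, ← prod_filter]
    congr 1
    ext i; simp only [mem_filter, mem_range]
    omega
  · rw [prod_filter]
    rw [show (fun i : Fin n => if j ≤ (i : ℕ) then c i else 1)
        = fun i : Fin n => (fun m => if j ≤ m then C m else 1) (i : ℕ) from
        funext fun i => by simp [hCv]]
    rw [Fin.prod_univ_eq_prod_range (fun m => if j ≤ m then C m else 1) n, ← prod_filter]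
    congr 1
    ext i; simp only [mem_filter, mem_range, mem_Ico]
    omega
end

section
/- For the characteristic polynomial P₀(ν) (i.e., φ = 0), the constant term and the coefficient of ν both vanish; in other words, ν² divides P₀(ν). -/
open Filter Topology

/-- For the characteristic polynomial `P₀(ν)` (the case `φ = 0`) of the nearest-neighbor
flock model, the constant term and the coefficient of `ν` both vanish:
`P₀(0) = 0` and `P₀'(0) = 0`. -/
theorem stmt_8 (p : ℕ) [NeZero p]
    (gx gv ρx1 ρxm ρv1 ρvm : ZMod p → ℝ)
    (hx : ∀ α, ρxm α + 1 + ρx1 α = 0)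
    (hv : ∀ α, ρvm α + 1 + ρv1 α = 0) :
    let ψ0 : ZMod p → ℂ → ℂ := fun α ν => (gv α : ℂ) * ν + (gx α : ℂ)
    let ψ1 : ZMod p → ℂ → ℂ := fun α ν => (gv α : ℂ) * (ρv1 α : ℂ) * ν + (gx α : ℂ) * (ρx1 α : ℂ)
    let ψm : ZMod p → ℂ → ℂ := fun α ν => (gv α : ℂ) * (ρvm α : ℂ) * ν + (gx α : ℂ) * (ρxm α : ℂ)
    let P : ℂ → ℂ := fun ν =>
      (Matrix.of fun α β : ZMod p =>
          (if β = α then ν ^ 2 + ψ0 α ν else 0) +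
          (if β = α + 1 then ψ1 α ν else 0) +
          (if β = α - 1 then ψm α ν else 0)).det
    P 0 = 0 ∧ deriv P 0 = 0 := by
  intro ψ0 ψ1 ψm P
  set M : ℂ → Matrix (ZMod p) (ZMod p) ℂ := fun ν =>
    Matrix.of fun α β : ZMod p =>
      (if β = α then ν ^ 2 + ψ0 α ν else 0) +
      (if β = α + 1 then ψ1 α ν else 0) +
      (if β = α - 1 then ψm α ν else 0) with hM
  set Q : ℂ → ℂ := fun ν => ((M ν).updateCol 0 fun _ => 1).det with hQdef
  have key : ∀ ν, P ν = ν ^ 2 * Q ν := by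
    intro ν
    have hsum : ∀ α, (fun k => ∑ i, (fun _ : ZMod p => (1:ℂ)) i • M ν k i) α
        = (ν ^ 2 • fun _ : ZMod p => (1:ℂ)) α := by
      intro α
      have hx' : (ρxm α : ℂ) + 1 + ρx1 α = 0 := by exact_mod_cast hx α
      have hv' : (ρvm α : ℂ) + 1 + ρv1 α = 0 := by exact_mod_cast hv α
      simp only [hM, Matrix.of_apply, one_smul, Finset.sum_add_distrib,
        Finset.sum_ite_eq' Finset.univ, Finset.mem_univ, if_true, Pi.smul_apply,
        smul_eq_mul, mul_one, one_mul, ψ0, ψ1, ψm]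
      linear_combination (gv α : ℂ) * ν * hv' + (gx α : ℂ) * hx'
    have h1 := Matrix.det_updateCol_sum (M ν) 0 (fun _ => (1:ℂ))
    rw [funext hsum, Matrix.det_updateCol_smul] at h1
    have : P ν = (M ν).det := rfl
    rw [this, ← one_smul ℂ (M ν).det, ← h1, hQdef]
  have hQcont : Continuous Q := by
    apply Continuous.matrix_det
    apply Continuous.matrix_updateCol
    · apply continuous_matrix
      intro i j
      simp only [hM, Matrix.of_apply, ψ0, ψ1, ψm]
      split_ifs <;> fun_prop
    · exact continuous_const
  have hP0 : P 0 = 0 := by rw [key]; ring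
  refine ⟨hP0, ?_⟩
  have h1 : Tendsto (fun ν : ℂ => ν * Q ν) (𝓝 0) (𝓝 0) := by
    have := (continuous_id.mul hQcont).tendsto 0
    convert this using 2 <;> simp
  have h2 : Tendsto (slope P 0) (𝓝[≠] (0:ℂ)) (𝓝 0) := by
    apply (h1.mono_left nhdsWithin_le_nhds).congr'
    filter_upwards [self_mem_nhdsWithin] with ν hν
    have hν0 : ν ≠ 0 := hν
    rw [slope_def_field, key, hP0]
    field_simp
    ring
  exact (hasDerivAt_iff_tendsto_slope.mpr h2).deriv
end

section
/- With g_x^{(α)}, g_v^{(α)} > 0 and a_{02}, a_{12}, a_{20}, a_{30} as given (a_{02} = 2^{-p}∏g_x; a_{12} = 2^{-p}∏g_x·Σ g_v/g_x; a_{20} = (p/2^{p-1})∏g_x·Σ 1/g_x; a_{30} = (2p/2^p)∏g_x·(Σ 1/g_x · Σ g_v/g_x − Σ g_v/(g_x)²)), one has (a_{30}a_{02} − a_{12}a_{20})/a_{20}² = −Avg(g_v^{(k)}/(g_x^{(k)})²) / (2p²·Avg(1/g_x^{(k)})²), which is strictly negative. -/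
lemma key_16 (p : ℕ) (hp : 1 ≤ p) (P S1 S2 S3 : ℝ)
    (hP : P ≠ 0) (hS1 : S1 ≠ 0) (hpR : (p : ℝ) ≠ 0) :
    ((2 * (p : ℝ) / 2 ^ p) * P * (S1 * S2 - S3) * (((2 : ℝ) ^ p)⁻¹ * P)
      - (((2 : ℝ) ^ p)⁻¹ * P * S2) * (((p : ℝ) / 2 ^ (p - 1)) * P * S1))
      / (((p : ℝ) / 2 ^ (p - 1)) * P * S1) ^ 2
      = -(((1 / (p : ℝ)) * S3) / (2 * (p : ℝ) ^ 2 * ((1 / (p : ℝ)) * S1) ^ 2)) := by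
  have h2p : ((2 : ℝ) ^ p) = 2 * 2 ^ (p - 1) := by
    rw [← pow_succ']; congr 1; omega
  have h2 : ((2 : ℝ) ^ (p - 1)) ≠ 0 := by positivity
  rw [h2p]
  field_simp
  ring

/-- With `g_x, g_v > 0` and
`a_{02} = 2^{-p} ∏ g_x`, `a_{12} = 2^{-p} (∏ g_x)(Σ g_v/g_x)`,
`a_{20} = (p/2^{p-1}) (∏ g_x)(Σ 1/g_x)`,
`a_{30} = (2p/2^p) (∏ g_x)((Σ 1/g_x)(Σ g_v/g_x) − Σ g_v/g_x²)`, one has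
`(a_{30}a_{02} − a_{12}a_{20})/a_{20}² = −Avg(g_v/g_x²)/(2p² Avg(1/g_x)²) < 0`. -/
theorem stmt_16 (p : ℕ) (hp : 1 ≤ p) (gx gv : Fin p → ℝ)
    (hgx : ∀ k, 0 < gx k) (hgv : ∀ k, 0 < gv k)
    (a02 a12 a20 a30 : ℝ)
    (h02 : a02 = ((2 : ℝ) ^ p)⁻¹ * ∏ k, gx k)
    (h12 : a12 = ((2 : ℝ) ^ p)⁻¹ * (∏ k, gx k) * ∑ k, gv k / gx k)
    (h20 : a20 = ((p : ℝ) / 2 ^ (p - 1)) * (∏ k, gx k) * ∑ k, (gx k)⁻¹)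
    (h30 : a30 = (2 * (p : ℝ) / 2 ^ p) * (∏ k, gx k) *
        ((∑ k, (gx k)⁻¹) * (∑ k, gv k / gx k) - ∑ k, gv k / (gx k) ^ 2)) :
    (a30 * a02 - a12 * a20) / a20 ^ 2
        = -(((1 / (p : ℝ)) * ∑ k, gv k / (gx k) ^ 2) /
            (2 * (p : ℝ) ^ 2 * ((1 / (p : ℝ)) * ∑ k, (gx k)⁻¹) ^ 2)) ∧
    (a30 * a02 - a12 * a20) / a20 ^ 2 < 0 := by
  haveI : Nonempty (Fin p) := Fin.pos_iff_nonempty.mp hp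
  have hP : 0 < ∏ k, gx k := Finset.prod_pos fun k _ => hgx k
  have hS1 : 0 < ∑ k, (gx k)⁻¹ :=
    Finset.sum_pos (fun k _ => inv_pos.mpr (hgx k)) Finset.univ_nonempty
  have hS3 : 0 < ∑ k, gv k / (gx k) ^ 2 :=
    Finset.sum_pos (fun k _ => div_pos (hgv k) (pow_pos (hgx k) 2)) Finset.univ_nonempty
  have hpR : (0 : ℝ) < p := by exact_mod_cast hp
  have heq : (a30 * a02 - a12 * a20) / a20 ^ 2
      = -(((1 / (p : ℝ)) * ∑ k, gv k / (gx k) ^ 2) /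
          (2 * (p : ℝ) ^ 2 * ((1 / (p : ℝ)) * ∑ k, (gx k)⁻¹) ^ 2)) := by
    subst h02 h12 h20 h30
    exact key_16 p hp _ _ _ _ hP.ne' hS1.ne' hpR.ne'
  refine ⟨heq, ?_⟩
  rw [heq]
  have : 0 < ((1 / (p : ℝ)) * ∑ k, gv k / (gx k) ^ 2) /
      (2 * (p : ℝ) ^ 2 * ((1 / (p : ℝ)) * ∑ k, (gx k)⁻¹) ^ 2) := by positivity
  linarith
end

section
/- Let L be a real symmetric negative semidefinite n×n matrix and α > 0. Then every eigenvalue ν of the 2n×2n block matrix [[0, I],[L, αL]] satisfies Re(ν) ≤ 0. Moreover each such eigenvalue is of the form ν = (αλ)/2 ± √(α²λ²/4 + λ) for some eigenvalue λ ≤ 0 of L. -/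
open Matrix Complex ComplexOrder

private lemma eig_of_mem_spectrum {m : Type*} [Fintype m] [DecidableEq m] {K : Type*} [Field K]
    (A : Matrix m m K) (ν : K) (h : ν ∈ spectrum K A) : ∃ v ≠ 0, A *ᵥ v = ν • v := by
  rw [spectrum.mem_iff, Matrix.isUnit_iff_isUnit_det, isUnit_iff_ne_zero, not_not] at h
  obtain ⟨v, hv0, hv⟩ := Matrix.exists_mulVec_eq_zero_iff.mpr h
  refine ⟨v, hv0, ?_⟩
  rw [Matrix.sub_mulVec, Algebra.algebraMap_eq_smul_one, Matrix.smul_mulVec,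
    Matrix.one_mulVec, sub_eq_zero] at hv
  exact hv.symm


/-- Let `L` be a real symmetric negative semidefinite matrix and `α > 0`. Every eigenvalue
`ν` of the block matrix `[[0, I], [L, αL]]` satisfies `Re ν ≤ 0`, and is of the form
`ν = αλ/2 ± √(α²λ²/4 + λ)` for some eigenvalue `λ ≤ 0` of `L`. -/
theorem stmt_17 {n : ℕ} (L : Matrix (Fin n) (Fin n) ℝ) (α : ℝ)
    (hL : L.IsSymm) (hneg : (-L).PosSemidef) (hα : 0 < α) :
    ∀ ν ∈ spectrum ℂ
        ((Matrix.fromBlocks (0 : Matrix (Fin n) (Fin n) ℝ)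
            (1 : Matrix (Fin n) (Fin n) ℝ) L (α • L)).map (Complex.ofReal)),
      ν.re ≤ 0 ∧
      ∃ lam : ℝ, lam ∈ spectrum ℝ L ∧ lam ≤ 0 ∧
        (ν = (α * lam) / 2 + ((α ^ 2 * lam ^ 2 / 4 + lam : ℝ) : ℂ) ^ ((1 : ℂ) / 2) ∨
         ν = (α * lam) / 2 - ((α ^ 2 * lam ^ 2 / 4 + lam : ℝ) : ℂ) ^ ((1 : ℂ) / 2)) := by
  classical
  intro ν hν
  set Lc : Matrix (Fin n) (Fin n) ℂ := L.map Complex.ofReal with hLcdef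
  have hM : (Matrix.fromBlocks (0 : Matrix (Fin n) (Fin n) ℝ) 1 L (α • L)).map Complex.ofReal
      = Matrix.fromBlocks 0 1 Lc ((α : ℂ) • Lc) := by
    rw [Matrix.fromBlocks_map]
    ext i j
    rcases i with i | i <;> rcases j with j | j <;>
      simp [Matrix.map_apply, Matrix.one_apply, apply_ite Complex.ofReal, hLcdef]
  rw [hM] at hν
  obtain ⟨v, hv0, hv⟩ := eig_of_mem_spectrum _ _ hν
  set x : Fin n → ℂ := v ∘ Sum.inl with hxdef
  set y : Fin n → ℂ := v ∘ Sum.inr with hydef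
  rw [Matrix.fromBlocks_mulVec] at hv
  have hy : y = ν • x := by
    funext i
    have := congrFun hv (Sum.inl i)
    simpa [hxdef, hydef] using this
  have h2 : Lc *ᵥ x + (α : ℂ) • (Lc *ᵥ y) = ν • y := by
    funext i
    have := congrFun hv (Sum.inr i)
    simpa [hxdef, hydef, Matrix.smul_mulVec] using this
  have hx0 : x ≠ 0 := by
    intro hx
    apply hv0
    funext i
    cases i with
    | inl i => exact congrFun hx i
    | inr i => simpa [hx, hydef] using congrFun hy i
  -- key equation : (1 + α ν) • (Lc *ᵥ x) = ν ^ 2 • x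
  have hkey : (1 + (α : ℂ) * ν) • (Lc *ᵥ x) = (ν ^ 2) • x := by
    rw [hy, Matrix.mulVec_smul] at h2
    funext i
    have := congrFun h2 i
    simp only [Pi.add_apply, Pi.smul_apply, smul_eq_mul] at this ⊢
    linear_combination this
  have hden : (1 + (α : ℂ) * ν) ≠ 0 := by
    intro h0
    have hν0 : ν ≠ 0 := by
      intro h; rw [h] at h0; simp at h0
    have h1 : (ν ^ 2) • x = 0 := by rw [← hkey, h0, zero_smul]
    rcases smul_eq_zero.mp h1 with h | h
    · exact pow_ne_zero 2 hν0 h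
    · exact hx0 h
  set μ : ℂ := ν ^ 2 / (1 + (α : ℂ) * ν) with hμdef
  have heigL : Lc *ᵥ x = μ • x := by
    funext i
    have := congrFun hkey i
    simp only [Pi.smul_apply, smul_eq_mul, hμdef] at this ⊢
    rw [div_mul_eq_mul_div, eq_div_iff hden]
    linear_combination this
  -- μ is real
  have hherm : Lcᴴ = Lc := by
    ext i j
    simp only [hLcdef, Matrix.conjTranspose_apply, Matrix.map_apply, Complex.star_def,
      Complex.conj_ofReal, Complex.ofReal_inj]
    exact congrFun (congrFun hL i) j
  have hc : star x ⬝ᵥ x ≠ 0 := fun h => hx0 (dotProduct_star_self_eq_zero.mp h)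
  have hrealform : star (star x ⬝ᵥ (Lc *ᵥ x)) = star x ⬝ᵥ (Lc *ᵥ x) := by
    conv_lhs => rw [Matrix.star_dotProduct, star_star, Matrix.star_mulVec, hherm]
    rw [← Matrix.dotProduct_mulVec]
  have hqc : star x ⬝ᵥ (Lc *ᵥ x) = μ * (star x ⬝ᵥ x) := by
    rw [heigL, dotProduct_smul, smul_eq_mul]
  have hcc : star (star x ⬝ᵥ x) = star x ⬝ᵥ x := (Matrix.star_dotProduct x x).symm
  have hμstar : star μ = μ := by
    have h1 : star μ * (star x ⬝ᵥ x) = μ * (star x ⬝ᵥ x) := by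
      calc star μ * (star x ⬝ᵥ x) = star (μ * (star x ⬝ᵥ x)) := by rw [star_mul', hcc]
        _ = star (star x ⬝ᵥ (Lc *ᵥ x)) := by rw [hqc]
        _ = star x ⬝ᵥ (Lc *ᵥ x) := hrealform
        _ = μ * (star x ⬝ᵥ x) := hqc
    exact mul_right_cancel₀ hc h1
  set lam : ℝ := μ.re with hlamdef
  have hμreal : (lam : ℂ) = μ := Complex.conj_eq_iff_re.mp hμstar
  have hμx : Lc *ᵥ x = (lam : ℂ) • x := by rw [heigL, hμreal]
  -- lam is a real eigenvalue of L
  have hspec : lam ∈ spectrum ℝ L := by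
    rw [spectrum.mem_iff, Matrix.isUnit_iff_isUnit_det, isUnit_iff_ne_zero, not_not]
    have hdetC : ((algebraMap ℂ (Matrix (Fin n) (Fin n) ℂ)) ((lam : ℝ) : ℂ) - Lc).det = 0 := by
      rw [← Matrix.exists_mulVec_eq_zero_iff]
      refine ⟨x, hx0, ?_⟩
      rw [Matrix.sub_mulVec, Algebra.algebraMap_eq_smul_one, Matrix.smul_mulVec,
        Matrix.one_mulVec, hμx, sub_self]
    have hmap : ((algebraMap ℝ (Matrix (Fin n) (Fin n) ℝ)) lam - L).map Complex.ofReal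
        = (algebraMap ℂ (Matrix (Fin n) (Fin n) ℂ)) ((lam : ℝ) : ℂ) - Lc := by
      ext i j
      simp [Matrix.map_apply, Matrix.algebraMap_eq_diagonal, Matrix.diagonal_apply, hLcdef,
        apply_ite Complex.ofReal]
    rw [← hmap] at hdetC
    have hdet2 := RingHom.map_det Complex.ofRealHom ((algebraMap ℝ (Matrix (Fin n) (Fin n) ℝ)) lam - L)
    rw [RingHom.mapMatrix_apply] at hdet2
    have : Complex.ofRealHom (((algebraMap ℝ (Matrix (Fin n) (Fin n) ℝ)) lam - L).det) = 0 := by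
      rw [hdet2]
      convert hdetC using 2
      rfl
    simpa using this
  -- lam ≤ 0
  have hlam : lam ≤ 0 := by
    obtain ⟨w, hw0, hw⟩ := eig_of_mem_spectrum L lam hspec
    have hql := hneg.dotProduct_mulVec_nonneg w
    have hsw : star w = w := by funext i; simp
    rw [hsw, Matrix.neg_mulVec, hw, dotProduct_neg, dotProduct_smul,
      smul_eq_mul] at hql
    have hwpos : 0 < w ⬝ᵥ w := by
      have hnn : 0 ≤ w ⬝ᵥ w := Finset.sum_nonneg fun i _ => mul_self_nonneg (w i)
      have hne : w ⬝ᵥ w ≠ 0 := by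
        intro h
        exact hw0 (dotProduct_star_self_eq_zero.mp (by rw [hsw]; exact h))
      exact lt_of_le_of_ne hnn (Ne.symm hne)
    nlinarith
  -- the quadratic equation
  obtain ⟨i, hxi'⟩ := Function.ne_iff.mp hx0
  have hxi : x i ≠ 0 := by simpa using hxi'
  have hquad : ν ^ 2 = (α : ℂ) * lam * ν + lam := by
    have hkey2 : (1 + (α : ℂ) * ν) • ((lam : ℂ) • x) = (ν ^ 2) • x := by rw [← hμx]; exact hkey
    have e := congrFun hkey2 i
    simp only [Pi.smul_apply, smul_eq_mul] at e
    have e2 : ((1 + (α : ℂ) * ν) * lam - ν ^ 2) * x i = 0 := by linear_combination e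
    rcases mul_eq_zero.mp e2 with h | h
    · linear_combination -h
    · exact absurd h hxi
  set D : ℝ := α ^ 2 * lam ^ 2 / 4 + lam with hDdef
  set s : ℂ := ((D : ℝ) : ℂ) ^ ((1 : ℂ) / 2) with hsdef
  have hs2 : s ^ 2 = (D : ℂ) := by
    by_cases hD : (D : ℂ) = 0
    · rw [hsdef, hD, Complex.zero_cpow (by norm_num)]
      norm_num
    · rw [hsdef, pow_two, ← Complex.cpow_add _ _ hD]
      norm_num
  have hfact : (ν - (α : ℂ) * lam / 2) ^ 2 = s ^ 2 := by
    rw [hs2, hDdef]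
    push_cast
    linear_combination hquad
  have hbranch : ν = (α : ℂ) * lam / 2 + s ∨ ν = (α : ℂ) * lam / 2 - s := by
    have hfact' : (ν - (α : ℂ) * lam / 2) * (ν - (α : ℂ) * lam / 2) = s * s := by
      linear_combination hfact
    rcases mul_self_eq_mul_self_iff.mp hfact' with h | h
    · left; linear_combination h
    · right; linear_combination h
  have hlamle : α * lam ≤ 0 := mul_nonpos_of_nonneg_of_nonpos hα.le hlam
  have hνre : ν.re = α * lam / 2 + s.re ∨ ν.re = α * lam / 2 - s.re := by
    rcases hbranch with h | h
    · left
      have h' : ν = ((α * lam / 2 : ℝ) : ℂ) + s := by rw [h]; push_cast; ring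
      rw [h']; simp
    · right
      have h' : ν = ((α * lam / 2 : ℝ) : ℂ) - s := by rw [h]; push_cast; ring
      rw [h']; simp
  have him : s.re * s.im = 0 := by
    have h := congrArg Complex.im hs2
    simp [pow_two, Complex.mul_im] at h
    linarith
  have hre2 : s.re ^ 2 - s.im ^ 2 = D := by
    have h := congrArg Complex.re hs2
    simp [pow_two, Complex.mul_re] at h
    nlinarith [h]
  have hDle : D ≤ (α * lam / 2) ^ 2 := by rw [hDdef]; nlinarith
  clear_value s D lam μ
  refine ⟨?_, lam, hspec, hlam, ?_⟩
  · rcases mul_eq_zero.mp him with h0 | h0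
    · rcases hνre with h | h <;> rw [h, h0] <;> linarith
    · have h0' : s.im ^ 2 = 0 := by rw [h0]; ring
      have hs' : s.re ^ 2 ≤ (-(α * lam / 2)) ^ 2 := by nlinarith [hre2, hDle, h0']
      obtain ⟨hb1, hb2⟩ := abs_le_of_sq_le_sq' hs' (by linarith)
      rcases hνre with h | h <;> rw [h] <;> linarith
  · rw [hsdef, hDdef] at hbranch; exact hbranch
end
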